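/- Let n and b be natural numbers with n ≥ 1 and b ≥ 2. Then the Frobenius number of T_b(n) is (b³ + b² − b − 1)·b^(2n) − (b+1)·b^n − 2b + 3; that is, this number is the greatest natural number that does not belong to T_b(n). -/

import Mathlib

/-- The Thabit numerical semigroup base `b`: the additive submonoid of ℕ generated by
`{(b+1)·b^(n+i) − 1 : i ∈ ℕ}`. -/
def thabitSemigroup (b n : ℕ) : AddSubmonoid ℕ :=
  AddSubmonoid.closure {m : ℕ | ∃ i : ℕ, m = (b + 1) * b ^ (n + i) - 1}

namespace ThabitAux

/-- base-`b` digit sum -/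
def s (b Q : ℕ) : ℕ := (Nat.digits b Q).sum

lemma s_zero (b : ℕ) : s b 0 = 0 := by simp [s]

lemma s_mul_add {b : ℕ} (hb : 2 ≤ b) (q r : ℕ) (hr : r < b) :
    s b (b * q + r) = r + s b q := by
  by_cases h : b * q + r = 0
  · have hq : q = 0 := by
      rcases Nat.mul_eq_zero.mp (Nat.eq_zero_of_add_eq_zero_right h) with h' | h' <;> omega
    have hr0 : r = 0 := by omega
    simp [s, hq, hr0]
  · have h1 : 0 < b * q + r := Nat.pos_of_ne_zero h
    have hm : (b * q + r) % b = r := by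
      rw [Nat.mul_add_mod, Nat.mod_eq_of_lt hr]
    have hd : (b * q + r) / b = q := by
      rw [Nat.mul_add_div (by omega), Nat.div_eq_of_lt hr, Nat.add_zero]
    rw [s, Nat.digits_def' (by omega : 1 < b) h1, hm, hd, List.sum_cons]
    rfl

lemma s_lt_base {b : ℕ} (hb : 2 ≤ b) {r : ℕ} (hr : r < b) : s b r = r := by
  have := s_mul_add hb 0 r hr
  simpa [s_zero] using this

lemma s_succ_le {b : ℕ} (hb : 2 ≤ b) : ∀ m : ℕ, s b (m + 1) ≤ s b m + 1 := by
  intro m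
  induction m using Nat.strong_induction_on with
  | _ m ih =>
    by_cases h : (m + 1) % b = 0
    · obtain ⟨q, hq⟩ : b ∣ (m + 1) := Nat.dvd_of_mod_eq_zero h
      obtain ⟨q', rfl⟩ : ∃ q', q = q' + 1 := by
        cases q with
        | zero => omega
        | succ q' => exact ⟨q', rfl⟩
      have hbq : b * (q' + 1) = b * q' + b := by ring
      have hm : m = b * q' + (b - 1) := by omega
      have hq'm : q' < m := by
        have : 2 * q' ≤ b * q' := Nat.mul_le_mul_right _ hb
        omega
      have h1 : s b (m + 1) = s b (q' + 1) := by
        rw [hq, show b * (q' + 1) = b * (q' + 1) + 0 by ring, s_mul_add hb _ 0 (by omega)]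
        omega
      have h2 : s b m = (b - 1) + s b q' := by rw [hm, s_mul_add hb _ _ (by omega)]
      have h3 := ih q' hq'm
      omega
    · have hm1 : m + 1 = b * ((m + 1) / b) + (m + 1) % b := (Nat.div_add_mod _ _).symm
      have hm0 : m = b * ((m + 1) / b) + ((m + 1) % b - 1) := by omega
      have h1 : s b (m + 1) = (m + 1) % b + s b ((m + 1) / b) := by
        conv_lhs => rw [hm1]
        exact s_mul_add hb _ _ (Nat.mod_lt _ (by omega))
      have h2 : s b m = ((m + 1) % b - 1) + s b ((m + 1) / b) := by
        conv_lhs => rw [hm0]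
        exact s_mul_add hb _ _ (by have := Nat.mod_lt (m+1) (show 0 < b by omega); omega)
      omega

lemma s_mono_sub {b : ℕ} (hb : 2 ≤ b) {a c : ℕ} (h : a ≤ c) :
    s b c + a ≤ c + s b a := by
  induction c, h using Nat.le_induction with
  | base => omega
  | succ c hc ih => have := s_succ_le hb c; omega

lemma s_pow_mul {b : ℕ} (hb : 2 ≤ b) (c : ℕ) : ∀ i : ℕ, s b (c * b ^ i) = s b c := by
  intro i
  induction i with
  | zero => simp
  | succ i ih =>
    have h1 : c * b ^ (i + 1) = b * (c * b ^ i) + 0 := by ring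
    rw [h1, s_mul_add hb _ 0 (by omega)]
    omega

lemma s_pow_mul_sub_one {b : ℕ} (hb : 2 ≤ b) (c : ℕ) (hc : 1 ≤ c) :
    ∀ i : ℕ, s b (c * b ^ i - 1) = s b (c - 1) + i * (b - 1) := by
  intro i
  induction i with
  | zero => simp
  | succ i ih =>
    obtain ⟨M, hM⟩ : ∃ M, c * b ^ i = M + 1 := by
      have : 0 < c * b ^ i := Nat.mul_pos hc (Nat.pow_pos (n := i) (by omega))
      exact ⟨c * b ^ i - 1, by omega⟩
    have e1 : c * b ^ (i + 1) = (M + 1) * b := by rw [pow_succ, ← mul_assoc, hM]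
    have e2 : (M + 1) * b = b * M + b := by ring
    have e3 : c * b ^ (i + 1) - 1 = b * M + (b - 1) := by omega
    rw [e3, s_mul_add hb _ _ (by omega)]
    have e4 : s b M = s b (c - 1) + i * (b - 1) := by
      have : c * b ^ i - 1 = M := by omega
      rw [← this]; exact ih
    have e5 : (i + 1) * (b - 1) = i * (b - 1) + (b - 1) := by ring
    omega

lemma s_add_pow_le {b : ℕ} (hb : 2 ≤ b) : ∀ (e x : ℕ), s b (x + b ^ e) ≤ s b x + 1 := by
  intro e
  induction e with
  | zero => intro x; simpa using s_succ_le hb x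
  | succ e ih =>
    intro x
    have hx : x = b * (x / b) + x % b := (Nat.div_add_mod _ _).symm
    have e1 : x + b ^ (e + 1) = b * (x / b + b ^ e) + x % b := by
      rw [pow_succ]; ring_nf; omega
    have h1 : s b (x + b ^ (e + 1)) = x % b + s b (x / b + b ^ e) := by
      rw [e1]; exact s_mul_add hb _ _ (Nat.mod_lt _ (by omega))
    have h2 : s b x = x % b + s b (x / b) := by
      conv_lhs => rw [hx]
      exact s_mul_add hb _ _ (Nat.mod_lt _ (by omega))
    have := ih (x / b)
    omega

lemma modeq_s {b : ℕ} (hb : 2 ≤ b) (Q : ℕ) : Q ≡ s b Q [MOD b - 1] := by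
  rcases eq_or_lt_of_le hb with h | h
  · have : b - 1 = 1 := by omega
    rw [this]; exact Nat.modEq_one
  · refine Nat.modEq_digits_sum (b - 1) b ?_ Q
    rw [Nat.mod_eq_sub_mod (by omega), show b - (b - 1) = 1 by omega,
      Nat.mod_eq_of_lt (by omega)]




lemma sum_map_pow_succ (b : ℕ) (l : List ℕ) :
    ((l.map (· + 1)).map (b ^ ·)).sum = b * (l.map (b ^ ·)).sum := by
  induction l with
  | nil => simp
  | cons e l ih =>
    simp only [List.map_cons, List.sum_cons, ih, pow_succ']
    ring

lemma exists_list_s {b : ℕ} (hb : 2 ≤ b) : ∀ Q : ℕ, ∃ l : List ℕ,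
    l.length = s b Q ∧ (l.map (b ^ ·)).sum = Q := by
  intro Q
  induction Q using Nat.strong_induction_on with
  | _ Q ih =>
    rcases Nat.eq_zero_or_pos Q with rfl | hQ
    · exact ⟨[], by simp [s_zero]⟩
    · have hq : Q / b < Q := Nat.div_lt_self hQ (by omega)
      obtain ⟨l, hl1, hl2⟩ := ih (Q / b) hq
      have hsQ : s b Q = Q % b + s b (Q / b) := by
        conv_lhs => rw [show Q = b * (Q / b) + Q % b from (Nat.div_add_mod _ _).symm]
        exact s_mul_add hb _ _ (Nat.mod_lt _ (by omega))
      refine ⟨List.replicate (Q % b) 0 ++ l.map (· + 1), ?_, ?_⟩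
      · rw [List.length_append, List.length_replicate, List.length_map, hl1, hsQ]
      · rw [List.map_append, List.sum_append, List.map_replicate, sum_map_pow_succ, hl2]
        simp only [pow_zero, List.sum_replicate, smul_eq_mul, mul_one]
        have := Nat.div_add_mod Q b
        omega

lemma s_pos {b : ℕ} (hb : 2 ≤ b) {Q : ℕ} (hQ : 0 < Q) : 0 < s b Q := by
  by_contra h
  obtain ⟨l, hl1, hl2⟩ := exists_list_s hb Q
  have : l = [] := List.length_eq_zero_iff.mp (by omega)
  rw [this] at hl2
  simp at hl2
  omega

lemma exists_list_count {b : ℕ} (hb : 2 ≤ b) (Q : ℕ) :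
    ∀ t : ℕ, s b Q + t * (b - 1) ≤ Q → ∃ l : List ℕ,
      l.length = s b Q + t * (b - 1) ∧ (l.map (b ^ ·)).sum = Q := by
  intro t
  induction t with
  | zero => intro _; simpa using exists_list_s hb Q
  | succ t ih =>
    intro h
    have e2 : (t + 1) * (b - 1) = t * (b - 1) + (b - 1) := by ring
    obtain ⟨l, hl1, hl2⟩ := ih (by omega)
    have hlen : l.length < Q := by omega
    have hex : ∃ e ∈ l, 1 ≤ e := by
      by_contra hc
      push_neg at hc
      have hall : l.map (b ^ ·) = List.replicate l.length 1 := by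
        rw [List.eq_replicate_iff]
        refine ⟨by simp, ?_⟩
        intro x hx
        obtain ⟨e, hel, rfl⟩ := List.mem_map.mp hx
        have : e = 0 := by have := hc e hel; omega
        simp [this]
      rw [hall] at hl2
      simp [List.sum_replicate] at hl2
      omega
    obtain ⟨e, hel, he1⟩ := hex
    have hs1 : 0 < s b Q := s_pos hb (by omega)
    refine ⟨List.replicate b (e - 1) ++ l.erase e, ?_, ?_⟩
    · rw [List.length_append, List.length_replicate, List.length_erase_of_mem hel, hl1]
      omega
    · have hperm : List.Perm l (e :: l.erase e) := List.perm_cons_erase hel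
      have hsum : (l.map (b ^ ·)).sum = b ^ e + ((l.erase e).map (b ^ ·)).sum := by
        rw [(hperm.map (b ^ ·)).sum_eq, List.map_cons, List.sum_cons]
      rw [List.map_append, List.sum_append, List.map_replicate, List.sum_replicate,
        smul_eq_mul]
      have hpe : b * b ^ (e - 1) = b ^ e := by
        rw [← pow_succ']
        congr 1
        omega
      omega

lemma s_sum_le {b : ℕ} (hb : 2 ≤ b) (l : List ℕ) : s b ((l.map (b ^ ·)).sum) ≤ l.length := by
  induction l with
  | nil => simp [s_zero]
  | cons e l ih =>
    simp only [List.map_cons, List.sum_cons, List.length_cons]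
    rw [add_comm (b ^ e)]
    have := s_add_pow_le hb e ((l.map (b ^ ·)).sum)
    omega

lemma length_le_sum {b : ℕ} (hb : 2 ≤ b) (l : List ℕ) : l.length ≤ (l.map (b ^ ·)).sum := by
  induction l with
  | nil => simp
  | cons e l ih =>
    simp only [List.map_cons, List.sum_cons, List.length_cons]
    have : 1 ≤ b ^ e := Nat.one_le_pow _ _ (by omega)
    omega

lemma sum_modeq_length {b : ℕ} (hb : 2 ≤ b) (l : List ℕ) :
    (l.map (b ^ ·)).sum ≡ l.length [MOD b - 1] := by
  induction l with
  | nil => rfl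
  | cons e l ih =>
    simp only [List.map_cons, List.sum_cons, List.length_cons]
    have hb1 : b ^ e ≡ 1 [MOD b - 1] := by
      calc b ^ e ≡ 1 ^ e [MOD b - 1] :=
        Nat.ModEq.pow e ((Nat.modEq_iff_dvd' (by omega)).mpr (dvd_refl _)).symm
      _ = 1 := one_pow e
    simpa [Nat.add_comm] using hb1.add ih




lemma gen_eq {b n : ℕ} (hb : 2 ≤ b) (e : ℕ) :
    (b + 1) * b ^ (n + e) - 1 = (b + 1) * b ^ n * b ^ e - 1 := by
  rw [pow_add, mul_assoc]

lemma sum_gen {b n : ℕ} (hb : 2 ≤ b) (l : List ℕ) :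
    (l.map (fun e => (b + 1) * b ^ n * b ^ e - 1)).sum + l.length
      = (b + 1) * b ^ n * (l.map (b ^ ·)).sum := by
  induction l with
  | nil => simp
  | cons e l ih =>
    simp only [List.map_cons, List.sum_cons, List.length_cons]
    have h1 : 1 ≤ (b + 1) * b ^ n * b ^ e :=
      Nat.one_le_pow _ _ (by positivity) |>.trans (Nat.le_mul_of_pos_left _ (by positivity))
    have h2 : (b + 1) * b ^ n * (b ^ e + (l.map (b ^ ·)).sum)
        = (b + 1) * b ^ n * b ^ e + (b + 1) * b ^ n * (l.map (b ^ ·)).sum := by ring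
    omega

lemma mem_of {b n m Q k : ℕ} (hb : 2 ≤ b)
    (h1 : s b Q ≤ k) (h2 : k ≤ Q) (h3 : k ≡ s b Q [MOD b - 1])
    (hm : m + k = (b + 1) * b ^ n * Q) : m ∈ thabitSemigroup b n := by
  have hd : (b - 1) ∣ k - s b Q := (Nat.modEq_iff_dvd' h1).mp h3.symm
  obtain ⟨t, ht⟩ := hd
  have hk : k = s b Q + t * (b - 1) := by
    have : t * (b - 1) = (b - 1) * t := by ring
    omega
  obtain ⟨l, hl1, hl2⟩ := exists_list_count hb Q t (by omega)
  have hmem : ∀ x ∈ l.map (fun e => (b + 1) * b ^ n * b ^ e - 1), x ∈ thabitSemigroup b n := by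
    intro x hx
    obtain ⟨e, hel, rfl⟩ := List.mem_map.mp hx
    exact AddSubmonoid.subset_closure ⟨e, (gen_eq hb e).symm⟩
  have hsum := AddSubmonoid.list_sum_mem (thabitSemigroup b n) hmem
  have heq : (l.map (fun e => (b + 1) * b ^ n * b ^ e - 1)).sum = m := by
    have := sum_gen (n := n) hb l
    rw [hl1, hl2] at this
    omega
  rwa [heq] at hsum

lemma exists_of_mem {b n m : ℕ} (hb : 2 ≤ b) (h : m ∈ thabitSemigroup b n) :
    ∃ l : List ℕ, m + l.length = (b + 1) * b ^ n * (l.map (b ^ ·)).sum := by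
  induction h using AddSubmonoid.closure_induction with
  | mem x hx =>
    obtain ⟨i, rfl⟩ := hx
    refine ⟨[i], ?_⟩
    simp only [List.map_cons, List.map_nil, List.sum_cons, List.sum_nil, List.length_cons,
      List.length_nil, add_zero]
    rw [gen_eq hb i]
    have h1 : 0 < (b + 1) * b ^ n * b ^ i := by positivity
    omega
  | zero => exact ⟨[], by simp⟩
  | add x y hx hy ihx ihy =>
    obtain ⟨l1, h1⟩ := ihx
    obtain ⟨l2, h2⟩ := ihy
    refine ⟨l1 ++ l2, ?_⟩
    rw [List.map_append, List.sum_append, List.length_append, Nat.mul_add]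
    omega




lemma frob_not_mem {b n : ℕ} (hn : 1 ≤ n) (hb : 2 ≤ b) :
    (b ^ 3 + b ^ 2 - b - 1) * b ^ (2 * n) - (b + 1) * b ^ n - 2 * b + 3
      ∉ thabitSemigroup b n := by
  -- setup
  have hbn : b ≤ b ^ n := by
    calc b = b ^ 1 := (pow_one b).symm
    _ ≤ b ^ n := Nat.pow_le_pow_right (by omega) hn
  have hA : b * b + b ≤ (b + 1) * b ^ n := by
    calc b * b + b = (b + 1) * b := by ring
    _ ≤ (b + 1) * b ^ n := mul_le_mul_right hbn _
  have h2b : 2 * b ≤ b * b := mul_le_mul_left hb b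
  have hX : (b ^ 3 + b ^ 2 - b - 1) * b ^ (2 * n)
      = (b - 1) * ((b + 1) * b ^ n * ((b + 1) * b ^ n)) := by
    have h1 : b + 1 ≤ b ^ 3 + b ^ 2 := by nlinarith
    have h2 : b ^ 3 + b ^ 2 - b - 1 = (b - 1) * ((b + 1) * (b + 1)) := by
      zify [show b ≤ b ^ 3 + b ^ 2 by omega, show 1 ≤ b ^ 3 + b ^ 2 - b by omega,
        show 1 ≤ b by omega]
      ring
    rw [h2, two_mul, pow_add]
    ring
  have hBL : (b - 1) * ((b + 1) * b ^ n) = (b * b - 1) * b ^ n := by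
    zify [show 1 ≤ b by omega, show 1 ≤ b * b by nlinarith]
    ring
  -- digit sums we need, still in terms of b^n
  have hsL : s b ((b * b - 1) * b ^ n - 1) = s b (b * b - 2) + n * (b - 1) :=
    s_pow_mul_sub_one hb _ (by omega) n
  have hsb2 : s b (b * b - 2) = (b - 2) + (b - 1) := by
    have h1 : b * b - 2 = b * (b - 1) + (b - 2) := by
      have : b * (b - 1) + (b - 2) + 2 = b * b := by
        zify [show 1 ≤ b by omega, show 2 ≤ b from hb]; ring
      omega
    rw [h1, s_mul_add hb _ _ (by omega), s_lt_base hb (by omega)]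
  intro h
  obtain ⟨l, hl⟩ := exists_of_mem hb h
  -- generalize A
  obtain ⟨A, hA_def⟩ : ∃ A, (b + 1) * b ^ n = A := ⟨_, rfl⟩
  rw [hA_def] at hA hX hBL hl
  have hkQ : l.length ≤ (l.map (b ^ ·)).sum := length_le_sum hb l
  have hsk : s b ((l.map (b ^ ·)).sum) ≤ l.length := s_sum_le hb l
  have hQk : (l.map (b ^ ·)).sum ≡ l.length [MOD b - 1] := sum_modeq_length hb l
  obtain ⟨Q, hQ_def⟩ : ∃ Q, (l.map (b ^ ·)).sum = Q := ⟨_, rfl⟩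
  obtain ⟨k, hk_def⟩ : ∃ k, l.length = k := ⟨_, rfl⟩
  rw [hQ_def, hk_def] at hkQ hsk hQk hl
  rw [hX] at hl
  -- basic bounds
  have hCA : A + 2 * b + 3 ≤ (b - 1) * (A * A) := by
    have h1 : A * A ≤ (b - 1) * (A * A) := Nat.le_mul_of_pos_left _ (by omega)
    have h2 : 6 * A ≤ A * A := mul_le_mul_left (by omega) A
    omega
  have hF : (b - 1) * (A * A) - A - 2 * b + 3 + k
      = (b - 1) * (A * A) - A - 2 * b + 3 + k := rfl
  have hFk : ((b - 1) * (A * A) - A - 2 * b + 3) + k = A * Q := hl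
  have hQpos : 0 < Q := by
    rcases Nat.eq_zero_or_pos Q with rfl | h'
    · rw [Nat.mul_zero] at hFk; omega
    · exact h'
  have hspos : 0 < s b Q := s_pos hb hQpos
  have hba : 2 ≤ (b - 1) * A := by
    have : A ≤ (b - 1) * A := Nat.le_mul_of_pos_left _ (by omega)
    omega
  -- lower bound on Q
  have hL : (b - 1) * A - 1 ≤ Q := by
    by_contra hc
    push_neg at hc
    have h1 : A * Q ≤ A * ((b - 1) * A - 2) := mul_le_mul_right (by omega) A
    have h2 : A * ((b - 1) * A - 2) + 2 * A = (b - 1) * (A * A) := by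
      zify [show 2 ≤ (b - 1) * A from hba, show 1 ≤ b by omega]
      ring
    omega
  -- upper bound on Q
  have hU : Q ≤ (b - 1) * A + b - 3 := by
    by_contra hc
    push_neg at hc
    have h1 : (A - 1) * Q + Q = A * Q := by
      zify [show 1 ≤ A by omega]; ring
    have h2 : (A - 1) * ((b - 1) * A + b - 2) ≤ (A - 1) * Q := mul_le_mul_right (by omega) _
    have h3 : (A - 1) * ((b - 1) * A + b - 2) + A + b = (b - 1) * (A * A) + 2 := by
      zify [show 1 ≤ A by omega, show 2 ≤ (b - 1) * A + b by omega, show 1 ≤ b by omega]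
      ring
    omega
  -- congruences
  have hb1 : b ≡ 1 [MOD b - 1] := ((Nat.modEq_iff_dvd' (by omega)).mpr (dvd_refl _)).symm
  have hA2 : A ≡ 2 [MOD b - 1] := by
    have h1 : b + 1 ≡ 1 + 1 [MOD b - 1] := hb1.add_right 1
    have h2 : b ^ n ≡ 1 [MOD b - 1] := by simpa using hb1.pow n
    have h3 := h1.mul h2
    rw [hA_def] at h3
    simpa using h3
  have hCmod : (b - 1) * (A * A) ≡ 0 [MOD b - 1] :=
    Nat.modEq_zero_iff_dvd.mpr ⟨A * A, rfl⟩
  have hA2b : A + 2 * b ≡ 4 [MOD b - 1] := by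
    have := hA2.add (hb1.mul_left 2)
    simpa using this
  have hF1 : ((b - 1) * (A * A) - A - 2 * b + 3) + 1 ≡ 0 [MOD b - 1] := by
    have h1 : ((b - 1) * (A * A) - A - 2 * b + 3) + 1 + (A + 2 * b)
        = (b - 1) * (A * A) + 4 := by omega
    have h2 : ((b - 1) * (A * A) - A - 2 * b + 3) + 1 + (A + 2 * b) ≡ 0 + 4 [MOD b - 1] := by
      rw [h1]; simpa using hCmod.add_right 4
    exact Nat.ModEq.add_right_cancel hA2b h2
  have hL1 : ((b - 1) * A - 1) + 1 ≡ 0 [MOD b - 1] := by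
    rw [show ((b - 1) * A - 1) + 1 = (b - 1) * A by omega]
    exact Nat.modEq_zero_iff_dvd.mpr ⟨A, rfl⟩
  have hFL : ((b - 1) * (A * A) - A - 2 * b + 3) ≡ (b - 1) * A - 1 [MOD b - 1] :=
    Nat.ModEq.add_right_cancel' 1 (hF1.trans hL1.symm)
  have hAQ2 : A * Q ≡ 2 * Q [MOD b - 1] := hA2.mul_right Q
  have hFQ : ((b - 1) * (A * A) - A - 2 * b + 3) ≡ Q [MOD b - 1] := by
    have h1 : ((b - 1) * (A * A) - A - 2 * b + 3) + k ≡ 2 * Q [MOD b - 1] := by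
      rw [hFk]; exact hAQ2
    have h2 : ((b - 1) * (A * A) - A - 2 * b + 3) + Q ≡ Q + Q [MOD b - 1] := by
      have h3 := (Nat.ModEq.add_left _ hQk).trans h1
      rw [two_mul Q] at h3
      exact h3
    exact Nat.ModEq.add_right_cancel' Q h2
  have hQL : Q ≡ (b - 1) * A - 1 [MOD b - 1] := hFQ.symm.trans hFL
  have hQeq : Q = (b - 1) * A - 1 := by
    have hd : (b - 1) ∣ Q - ((b - 1) * A - 1) := (Nat.modEq_iff_dvd' hL).mp hQL.symm
    obtain ⟨t, ht⟩ := hd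
    rcases Nat.eq_zero_or_pos t with rfl | htp
    · omega
    · have : (b - 1) * 1 ≤ (b - 1) * t := mul_le_mul_right htp _
      omega
  -- final contradiction via digit sum of Q
  have hAL : A * ((b - 1) * A - 1) + A = (b - 1) * (A * A) := by
    zify [show 1 ≤ (b - 1) * A by omega, show 1 ≤ b by omega]
    ring
  have hk_eq : k = 2 * b - 3 := by
    rw [hQeq] at hFk
    omega
  have hQval : Q = (b * b - 1) * b ^ n - 1 := by omega
  have hsQ : s b Q = (b - 2) + (b - 1) + n * (b - 1) := by
    rw [hQval, hsL, hsb2]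
  have hnb : 1 * (b - 1) ≤ n * (b - 1) := mul_le_mul_left hn _
  omega




lemma frob_mem_of_gt {b n m : ℕ} (hn : 1 ≤ n) (hb : 2 ≤ b)
    (hm : (b ^ 3 + b ^ 2 - b - 1) * b ^ (2 * n) - (b + 1) * b ^ n - 2 * b + 3 < m) :
    m ∈ thabitSemigroup b n := by
  -- setup (same as part 1)
  have hbn : b ≤ b ^ n := by
    calc b = b ^ 1 := (pow_one b).symm
    _ ≤ b ^ n := Nat.pow_le_pow_right (by omega) hn
  have hA : b * b + b ≤ (b + 1) * b ^ n := by
    calc b * b + b = (b + 1) * b := by ring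
    _ ≤ (b + 1) * b ^ n := mul_le_mul_right hbn _
  have h2b : 2 * b ≤ b * b := mul_le_mul_left hb b
  have hX : (b ^ 3 + b ^ 2 - b - 1) * b ^ (2 * n)
      = (b - 1) * ((b + 1) * b ^ n * ((b + 1) * b ^ n)) := by
    have h1 : b + 1 ≤ b ^ 3 + b ^ 2 := by nlinarith
    have h2 : b ^ 3 + b ^ 2 - b - 1 = (b - 1) * ((b + 1) * (b + 1)) := by
      zify [show b ≤ b ^ 3 + b ^ 2 by omega, show 1 ≤ b ^ 3 + b ^ 2 - b by omega,
        show 1 ≤ b by omega]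
      ring
    rw [h2, two_mul, pow_add]
    ring
  have hBL : (b - 1) * ((b + 1) * b ^ n) = (b * b - 1) * b ^ n := by
    zify [show 1 ≤ b by omega, show 1 ≤ b * b by omega]
    ring
  -- digit sums in terms of b^n
  have hsb2 : s b (b * b - 2) = (b - 2) + (b - 1) := by
    have h1 : b * b - 2 = b * (b - 1) + (b - 2) := by
      have : b * (b - 1) + (b - 2) + 2 = b * b := by
        zify [show 1 ≤ b by omega, show 2 ≤ b from hb]; ring
      omega
    rw [h1, s_mul_add hb _ _ (by omega), s_lt_base hb (by omega)]
  have hsL0 : s b ((b * b - 1) * b ^ n - 1) = (b - 2) + (b - 1) + n * (b - 1) := by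
    rw [s_pow_mul_sub_one hb _ (by omega) n, show b * b - 1 - 1 = b * b - 2 by omega, hsb2]
  have hsB0 : s b ((b * b - 1) * b ^ n) = (b - 1) + (b - 1) := by
    rw [s_pow_mul hb _ n]
    have h1 : b * b - 1 = b * (b - 1) + (b - 1) := by
      have : b * (b - 1) + (b - 1) + 1 = b * b := by
        zify [show 1 ≤ b by omega]; ring
      omega
    rw [h1, s_mul_add hb _ _ (by omega), s_lt_base hb (by omega)]
  rw [hX] at hm
  -- generalize A
  obtain ⟨A, hA_def⟩ : ∃ A, (b + 1) * b ^ n = A := ⟨_, rfl⟩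
  rw [hA_def] at hA hm hBL
  -- abbreviations as facts
  have hba : 2 ≤ (b - 1) * A := by
    have : A ≤ (b - 1) * A := Nat.le_mul_of_pos_left _ (by omega)
    omega
  have hCA : A + 2 * b + 3 ≤ (b - 1) * (A * A) := by
    have h1 : A * A ≤ (b - 1) * (A * A) := Nat.le_mul_of_pos_left _ (by omega)
    have h2 : 6 * A ≤ A * A := mul_le_mul_left (by omega) A
    omega
  have hWB : (b - 1) * (A - 1) + (b - 1) = (b - 1) * A := by
    zify [show 1 ≤ A by omega, show 1 ≤ b by omega]; ring
  have hW1 : A - 1 ≤ (b - 1) * (A - 1) := Nat.le_mul_of_pos_left _ (by omega)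
  have hCW : A * ((b - 1) * (A - 1)) + (b - 1) * A = (b - 1) * (A * A) := by
    zify [show 1 ≤ A by omega, show 1 ≤ b by omega]; ring
  have hAW6 : 6 * ((b - 1) * (A - 1)) ≤ A * ((b - 1) * (A - 1)) :=
    mul_le_mul_left (by omega) _
  -- W + b ≤ F, so W ≤ F < m
  have hWF : (b - 1) * (A - 1) + b ≤ (b - 1) * (A * A) - A - 2 * b + 3 := by omega
  -- the witness Qw
  have hWm : (b - 1) * (A - 1) ≤ m := by omega
  have hrlt : (m - (b - 1) * (A - 1)) % (b - 1) < b - 1 := Nat.mod_lt _ (by omega)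
  have hQwL : (b - 1) * (A - 1) + (m - (b - 1) * (A - 1)) % (b - 1) ≤ (b - 1) * A - 1 := by
    omega
  have hW0 : (b - 1) * (A - 1) ≡ 0 [MOD b - 1] := Nat.modEq_zero_iff_dvd.mpr ⟨A - 1, rfl⟩
  have hQw_mod : (b - 1) * (A - 1) + (m - (b - 1) * (A - 1)) % (b - 1) ≡ m [MOD b - 1] := by
    have h1 := hW0.add (Nat.mod_modEq (m - (b - 1) * (A - 1)) (b - 1))
    have h2 : (b - 1) * (A - 1) + (m - (b - 1) * (A - 1)) = m := by omega
    have h3 := hW0.add (Nat.ModEq.refl (m - (b - 1) * (A - 1)))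
    rw [h2] at h3
    exact h1.trans h3.symm
  -- (A-1) * L ≤ F
  have hALF : (A - 1) * ((b - 1) * A - 1) + b * A = (b - 1) * (A * A) + 1 := by
    zify [show 1 ≤ A by omega, show 1 ≤ (b - 1) * A by omega, show 1 ≤ b by omega]
    ring
  have hbA2 : 2 * A ≤ b * A := mul_le_mul_left hb A
  have hLF : (A - 1) * ((b - 1) * A - 1) ≤ (b - 1) * (A * A) - A - 2 * b + 3 := by omega
  have hQw_le : (A - 1) * ((b - 1) * (A - 1) + (m - (b - 1) * (A - 1)) % (b - 1)) ≤ m := by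
    have h1 : (A - 1) * ((b - 1) * (A - 1) + (m - (b - 1) * (A - 1)) % (b - 1))
        ≤ (A - 1) * ((b - 1) * A - 1) := mul_le_mul_right hQwL _
    omega
  -- find greatest
  set P : ℕ → Prop := fun Q => Q % (b - 1) = m % (b - 1) ∧ (A - 1) * Q ≤ m with hP_def
  have hQwP : P ((b - 1) * (A - 1) + (m - (b - 1) * (A - 1)) % (b - 1)) := ⟨hQw_mod, hQw_le⟩
  have hQwm : (b - 1) * (A - 1) + (m - (b - 1) * (A - 1)) % (b - 1) ≤ m := by omega
  have hQ0P : P (Nat.findGreatest P m) := Nat.findGreatest_spec hQwm hQwP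
  have hQ0ge := Nat.le_findGreatest hQwm hQwP
  obtain ⟨Q0, hQ0_def⟩ : ∃ Q0, Nat.findGreatest P m = Q0 := ⟨_, rfl⟩
  rw [hQ0_def] at hQ0P hQ0ge
  obtain ⟨hQ0_mod, hQ0_le⟩ := hQ0P
  have hQ0W : (b - 1) * (A - 1) ≤ Q0 := by omega
  -- maximality
  have htop : m < (A - 1) * (Q0 + (b - 1)) := by
    by_contra hc
    push_neg at hc
    have hmod : (Q0 + (b - 1)) % (b - 1) = m % (b - 1) := by
      rw [Nat.add_mod_right, hQ0_mod]
    have hle : Q0 + (b - 1) ≤ m := by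
      have h1 : Q0 + (b - 1) ≤ (A - 1) * (Q0 + (b - 1)) :=
        Nat.le_mul_of_pos_left _ (by omega)
      omega
    exact Nat.findGreatest_is_greatest (by omega : Nat.findGreatest P m < Q0 + (b - 1)) hle
      ⟨hmod, hc⟩
  have hdist : (A - 1) * (Q0 + (b - 1)) = (A - 1) * Q0 + (b - 1) * (A - 1) := by
    zify [show 1 ≤ A by omega]; ring
  have hAQ0 : (A - 1) * Q0 + Q0 = A * Q0 := by
    zify [show 1 ≤ A by omega]; ring
  have hmAQ : m < A * Q0 := by omega
  -- k
  obtain ⟨k, hk_def⟩ : ∃ k, A * Q0 - m = k := ⟨_, rfl⟩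
  have hk : m + k = A * Q0 := by omega
  have hk_low : Q0 - (b - 1) * (A - 1) + 1 ≤ k := by omega
  have hk_hi : k ≤ Q0 := by omega
  -- congruence for k
  have hb1 : b ≡ 1 [MOD b - 1] := ((Nat.modEq_iff_dvd' (by omega)).mpr (dvd_refl _)).symm
  have hA2 : A ≡ 2 [MOD b - 1] := by
    have h1 : b + 1 ≡ 1 + 1 [MOD b - 1] := hb1.add_right 1
    have h2 : b ^ n ≡ 1 [MOD b - 1] := by simpa using hb1.pow n
    have h3 := h1.mul h2
    rw [hA_def] at h3
    simpa using h3
  have hmQ0 : m ≡ Q0 [MOD b - 1] := hQ0_mod.symm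
  have hk_cong : k ≡ s b Q0 [MOD b - 1] := by
    have h1 : A * Q0 ≡ 2 * Q0 [MOD b - 1] := hA2.mul_right Q0
    have h2 : m + k ≡ 2 * Q0 [MOD b - 1] := by rw [hk]; exact h1
    have h3 : Q0 + k ≡ Q0 + Q0 [MOD b - 1] := by
      have h4 : Q0 ≡ m [MOD b - 1] := hmQ0.symm
      have h5 := (h4.add_right k).trans h2
      rw [two_mul Q0] at h5
      exact h5
    exact (Nat.ModEq.add_left_cancel' Q0 h3).trans (modeq_s hb Q0)
  -- the key claim
  have hks : s b Q0 ≤ k := by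
    by_contra hlt
    push_neg at hlt
    have hkd : k + (b - 1) ≤ s b Q0 := by
      have hd : (b - 1) ∣ s b Q0 - k := (Nat.modEq_iff_dvd' (le_of_lt hlt)).mp hk_cong
      obtain ⟨t, ht⟩ := hd
      rcases Nat.eq_zero_or_pos t with rfl | htp
      · omega
      · have : (b - 1) * 1 ≤ (b - 1) * t := mul_le_mul_right htp _
        omega
    by_cases hbig : (b - 1) * (A - 1) + (b - 1) ≤ Q0
    · -- Q0 ≥ (b-1)*A : use monotonicity of Q - s(Q)
      have hQB : (b * b - 1) * b ^ n ≤ Q0 := by omega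
      have hmono := s_mono_sub hb hQB
      rw [hsB0] at hmono
      omega
    · push_neg at hbig
      -- Q0 ≤ (b-1)*A - 1
      by_cases hQL : Q0 = (b - 1) * A - 1
      · -- critical value
        have hsQ0 : s b Q0 = (b - 2) + (b - 1) + n * (b - 1) := by
          rw [hQL, show (b - 1) * A - 1 = (b * b - 1) * b ^ n - 1 by omega, hsL0]
        -- k ≥ 2b - 3
        have hk23 : 2 * b - 3 ≤ k := by
          rcases le_or_gt (2 * b - 3) k with h' | h'
          · exact h'
          · exfalso
            have hd : (b - 1) ∣ s b Q0 - k := (Nat.modEq_iff_dvd' (le_of_lt hlt)).mp hk_cong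
            obtain ⟨t, ht⟩ := hd
            have hkb1 : b - 1 ≤ k := by omega
            rcases le_or_gt t n with h'' | h''
            · have : (b - 1) * t ≤ (b - 1) * n := mul_le_mul_right h'' _
              have hcomm : (b - 1) * n = n * (b - 1) := by ring
              omega
            · have : (b - 1) * (n + 1) ≤ (b - 1) * t := mul_le_mul_right h'' _
              have hdist2 : (b - 1) * (n + 1) = n * (b - 1) + (b - 1) := by ring
              omega
        -- then m ≤ F, contradiction
        have hAL : A * ((b - 1) * A - 1) + A = (b - 1) * (A * A) := by
          zify [show 1 ≤ (b - 1) * A by omega, show 1 ≤ b by omega]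
          ring
        rw [hQL] at hk
        omega
      · -- Q0 ≤ (b-1)*A - 2, so b ≥ 3 and Q0 ≤ W + (b-3)
        have hb3 : 3 ≤ b := by omega
        have hQs : Q0 ≤ (b - 1) * (A - 1) + (b - 3) := by omega
        have h1 : A * Q0 ≤ A * ((b - 1) * (A - 1) + (b - 3)) := mul_le_mul_right hQs _
        have h2 : A * ((b - 1) * (A - 1) + (b - 3)) + 2 * A = (b - 1) * (A * A) := by
          zify [show 1 ≤ A by omega, show 3 ≤ b from hb3, show 1 ≤ b by omega]
          ring
        omega
  -- conclude
  refine mem_of hb hks hk_hi hk_cong ?_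
  rw [hA_def]
  exact hk


end ThabitAux

theorem thabit_frobenius (n b : ℕ) (hn : 1 ≤ n) (hb : 2 ≤ b) :
    IsGreatest {m : ℕ | m ∉ thabitSemigroup b n}
      ((b ^ 3 + b ^ 2 - b - 1) * b ^ (2 * n) - (b + 1) * b ^ n - 2 * b + 3) := by
  constructor
  · exact ThabitAux.frob_not_mem hn hb
  · intro x hx
    by_contra hle
    push_neg at hle
    exact hx (ThabitAux.frob_mem_of_gt hn hb hle)
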